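/- For every z ∈ ℝ, the regularised maximisation max_{π ∈ [0,1]} { π·z + φ(Φ⁻¹(π)) } has the unique maximiser π* = Φ(z), and the optimal value equals z·Φ(z) + φ(z), where Φ is the standard normal CDF and φ is the standard normal density. -/

import Mathlib

noncomputable section

open Real MeasureTheory Set Filter Topology

/-- Standard normal density `φ`. -/
def stdGaussPDF (y : ℝ) : ℝ := (Real.sqrt (2 * Real.pi))⁻¹ * Real.exp (-(y ^ 2) / 2)

/-- Standard normal CDF `Φ`. -/
def stdGaussCDF (z : ℝ) : ℝ := ∫ y in Set.Iic z, stdGaussPDF y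

/-- Quantile function `Φ⁻¹` (left inverse of `Φ` on `(0,1)`). -/
def stdGaussQuantile : ℝ → ℝ := Function.invFun stdGaussCDF

/-- Probit regulariser `H_Φ(p) = φ(Φ⁻¹(p))` on `(0,1)`, extended by `0` at the endpoints. -/
def probitReg (p : ℝ) : ℝ :=
  if p ≤ 0 ∨ 1 ≤ p then 0 else stdGaussPDF (stdGaussQuantile p)

lemma pdf_pos (y : ℝ) : 0 < stdGaussPDF y := by
  apply mul_pos (inv_pos.2 (Real.sqrt_pos.2 (by positivity))) (Real.exp_pos _)

lemma pdf_eq (y : ℝ) : stdGaussPDF y = (Real.sqrt (2 * Real.pi))⁻¹ * Real.exp (-(1/2) * y ^ 2) := by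
  unfold stdGaussPDF; ring_nf

lemma integrable_pdf : Integrable stdGaussPDF := by
  have h := (integrable_exp_neg_mul_sq (by norm_num : (0:ℝ) < 1/2)).const_mul (Real.sqrt (2 * Real.pi))⁻¹
  exact h.congr (by filter_upwards with y using (pdf_eq y).symm)

lemma integral_pdf : ∫ y, stdGaussPDF y = 1 := by
  have h : ∫ y, stdGaussPDF y = (Real.sqrt (2 * Real.pi))⁻¹ * ∫ y : ℝ, Real.exp (-(1/2) * y ^ 2) := by
    rw [← integral_const_mul]; exact integral_congr_ae (by filter_upwards with y using pdf_eq y)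
  rw [h, integral_gaussian]
  rw [show Real.pi / (1/2) = 2 * Real.pi by ring]
  rw [inv_mul_cancel₀ (by positivity)]

lemma cdf_strictMono : StrictMono stdGaussCDF := by
  intro a b hab
  have hint : IntegrableOn stdGaussPDF (Iic b) := integrable_pdf.integrableOn
  have hsplit : stdGaussCDF b = stdGaussCDF a + ∫ y in Ioc a b, stdGaussPDF y := by
    unfold stdGaussCDF
    rw [← setIntegral_union (Iic_disjoint_Ioc le_rfl) measurableSet_Ioc
      (integrable_pdf.integrableOn) (integrable_pdf.integrableOn), Iic_union_Ioc_eq_Iic hab.le]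
  have hpos : 0 < ∫ y in Ioc a b, stdGaussPDF y := by
    apply setIntegral_pos_iff_support_of_nonneg_ae ?_ integrable_pdf.integrableOn |>.2
    · have : Function.support stdGaussPDF = univ := by
        ext y; simp [Function.mem_support, (pdf_pos y).ne']
      rw [this, univ_inter, Real.volume_Ioc]
      simpa using hab
    · filter_upwards with y using (pdf_pos y).le
  linarith

lemma cdf_nonneg (z : ℝ) : 0 ≤ stdGaussCDF z :=
  setIntegral_nonneg measurableSet_Iic fun y _ => (pdf_pos y).le

lemma cdf_le_one (z : ℝ) : stdGaussCDF z ≤ 1 := by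
  rw [← integral_pdf]
  exact setIntegral_le_integral integrable_pdf (by filter_upwards with y using (pdf_pos y).le)

lemma cdf_tendsto_atTop : Tendsto stdGaussCDF atTop (𝓝 1) := by
  rw [← integral_pdf]
  exact (aecover_Iic tendsto_id).integral_tendsto_of_countably_generated integrable_pdf

lemma cdf_add_Ioi (z : ℝ) : stdGaussCDF z + ∫ y in Ioi z, stdGaussPDF y = 1 := by
  rw [← integral_pdf]
  exact intervalIntegral.integral_Iic_add_Ioi integrable_pdf.integrableOn integrable_pdf.integrableOn

lemma cdf_lt_one (z : ℝ) : stdGaussCDF z < 1 := by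
  have h := cdf_add_Ioi z
  have h2 : stdGaussCDF (z+1) + ∫ y in Ioi (z+1), stdGaussPDF y = 1 := cdf_add_Ioi (z+1)
  have h3 : stdGaussCDF z < stdGaussCDF (z+1) := cdf_strictMono (by linarith)
  have h4 : 0 ≤ ∫ y in Ioi (z+1), stdGaussPDF y :=
    setIntegral_nonneg measurableSet_Ioi fun y _ => (pdf_pos y).le
  linarith

lemma cdf_pos (z : ℝ) : 0 < stdGaussCDF z := lt_of_le_of_lt (cdf_nonneg (z-1)) (cdf_strictMono (by linarith))

lemma cdf_tendsto_atBot : Tendsto stdGaussCDF atBot (𝓝 0) := by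
  have h : Tendsto (fun z => ∫ y in Ioi z, stdGaussPDF y) atBot (𝓝 1) := by
    rw [← integral_pdf]
    exact (aecover_Ioi tendsto_id).integral_tendsto_of_countably_generated integrable_pdf
  have : stdGaussCDF = fun z => 1 - ∫ y in Ioi z, stdGaussPDF y := by
    ext z; linarith [cdf_add_Ioi z]
  rw [this]
  have := (tendsto_const_nhds (x := (1:ℝ)) (f := atBot)).sub h
  simpa using this

lemma pdf_continuous : Continuous stdGaussPDF := by
  unfold stdGaussPDF; continuity

lemma hasDerivAt_cdf (z : ℝ) : HasDerivAt stdGaussCDF (stdGaussPDF z) z := by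
  have key : ∀ x : ℝ, stdGaussCDF x = stdGaussCDF 0 + ∫ y in (0:ℝ)..x, stdGaussPDF y := by
    intro x
    rw [← intervalIntegral.integral_Iic_sub_Iic integrable_pdf.integrableOn
      integrable_pdf.integrableOn]
    unfold stdGaussCDF; ring
  have h : HasDerivAt (fun x => stdGaussCDF 0 + ∫ y in (0:ℝ)..x, stdGaussPDF y) (stdGaussPDF z) z := by
    apply HasDerivAt.const_add
    exact intervalIntegral.integral_hasDerivAt_right
      (integrable_pdf.intervalIntegrable)
      (pdf_continuous.stronglyMeasurableAtFilter _ _)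
      pdf_continuous.continuousAt
  exact h.congr_of_eventuallyEq (by filter_upwards with x using key x)

lemma hasDerivAt_pdf (y : ℝ) : HasDerivAt stdGaussPDF (-y * stdGaussPDF y) y := by
  have h1 : HasDerivAt (fun x : ℝ => -(x ^ 2) / 2) (-y) y := by
    have := ((hasDerivAt_pow 2 y).neg).div_const 2
    simpa using this.congr_deriv (by ring)
  have h2 := (h1.exp).const_mul (Real.sqrt (2 * Real.pi))⁻¹
  unfold stdGaussPDF
  refine h2.congr_deriv ?_; ring

lemma pdf_tendsto_of_arg (l : Filter ℝ) (h : Tendsto (fun y : ℝ => -(y ^ 2) / 2) l atBot) :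
    Tendsto stdGaussPDF l (𝓝 0) := by
  have h2 := (Real.tendsto_exp_atBot.comp h).const_mul (Real.sqrt (2 * Real.pi))⁻¹
  simpa only [Function.comp, mul_zero, stdGaussPDF.eq_unfold] using h2

lemma pdf_tendsto_atTop : Tendsto stdGaussPDF atTop (𝓝 0) := by
  apply pdf_tendsto_of_arg
  have h1 : Tendsto (fun y : ℝ => y ^ 2 / 2) atTop atTop :=
    (tendsto_pow_atTop (by norm_num : (2:ℕ) ≠ 0)).atTop_div_const (by norm_num)
  have h2 : Tendsto (Neg.neg : ℝ → ℝ) atTop atBot := tendsto_neg_atTop_atBot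
  have := h2.comp h1
  simpa only [Function.comp_def, neg_div] using this

lemma pdf_tendsto_atBot : Tendsto stdGaussPDF atBot (𝓝 0) := by
  apply pdf_tendsto_of_arg
  have hn : Tendsto (Neg.neg : ℝ → ℝ) atBot atTop := tendsto_neg_atBot_atTop
  have h0 : Tendsto (fun y : ℝ => y ^ 2) atBot atTop := by
    have := (tendsto_pow_atTop (by norm_num : (2:ℕ) ≠ 0)).comp hn
    simpa only [Function.comp_def, neg_sq] using this
  have h1 : Tendsto (fun y : ℝ => y ^ 2 / 2) atBot atTop := h0.atTop_div_const (by norm_num)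
  have h2 : Tendsto (Neg.neg : ℝ → ℝ) atTop atBot := tendsto_neg_atTop_atBot
  have := h2.comp h1
  simpa only [Function.comp_def, neg_div] using this

lemma quantile_cdf (y : ℝ) : stdGaussQuantile (stdGaussCDF y) = y :=
  Function.leftInverse_invFun cdf_strictMono.injective y

lemma cdf_continuous : Continuous stdGaussCDF :=
  continuous_iff_continuousAt.2 fun y => (hasDerivAt_cdf y).continuousAt

def gAux (z y : ℝ) : ℝ := z * stdGaussCDF y + stdGaussPDF y

lemma hasDerivAt_gAux (z y : ℝ) : HasDerivAt (gAux z) ((z - y) * stdGaussPDF y) y := by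
  have h := ((hasDerivAt_cdf y).const_mul z).add (hasDerivAt_pdf y)
  refine h.congr_deriv ?_; ring

lemma gAux_continuous (z : ℝ) : Continuous (gAux z) :=
  ((continuous_const.mul cdf_continuous)).add pdf_continuous

lemma gAux_strictMonoOn (z : ℝ) : StrictMonoOn (gAux z) (Iic z) := by
  apply strictMonoOn_of_deriv_pos (convex_Iic z) (gAux_continuous z).continuousOn
  intro x hx
  rw [interior_Iic] at hx
  rw [(hasDerivAt_gAux z x).deriv]
  exact mul_pos (by simp only [mem_Iio] at hx; linarith) (pdf_pos x)

lemma gAux_strictAntiOn (z : ℝ) : StrictAntiOn (gAux z) (Ici z) := by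
  apply strictAntiOn_of_deriv_neg (convex_Ici z) (gAux_continuous z).continuousOn
  intro x hx
  rw [interior_Ici] at hx
  rw [(hasDerivAt_gAux z x).deriv]
  exact mul_neg_of_neg_of_pos (by simp only [mem_Ioi] at hx; linarith) (pdf_pos x)

lemma gAux_lt (z y : ℝ) (h : y ≠ z) : gAux z y < gAux z z := by
  rcases lt_or_gt_of_ne h with h1 | h1
  · exact gAux_strictMonoOn z h1.le (le_refl z : z ∈ Iic z) h1
  · exact gAux_strictAntiOn z (le_refl z : z ∈ Ici z) h1.le h1

lemma gAux_tendsto_atBot (z : ℝ) : Tendsto (gAux z) atBot (𝓝 0) := by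
  have := (cdf_tendsto_atBot.const_mul z).add pdf_tendsto_atBot
  simpa [gAux.eq_unfold] using this

lemma gAux_tendsto_atTop (z : ℝ) : Tendsto (gAux z) atTop (𝓝 z) := by
  have := (cdf_tendsto_atTop.const_mul z).add pdf_tendsto_atTop
  simpa [gAux.eq_unfold] using this

lemma gAux_pos (z : ℝ) : 0 < gAux z z := by
  have h1 : gAux z (z - 1) < gAux z z := gAux_lt z _ (by linarith)
  have h2 : 0 ≤ gAux z (z - 1) := by
    apply le_of_tendsto (gAux_tendsto_atBot z)
    filter_upwards [eventually_le_atBot (z - 1)] with y hy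
    rcases eq_or_lt_of_le hy with rfl | hy'
    · exact le_rfl
    · exact (gAux_strictMonoOn z (by simp only [mem_Iic]; linarith : y ∈ Iic z) (by simp only [mem_Iic]; linarith : z - 1 ∈ Iic z) hy').le
  linarith

lemma lt_gAux (z : ℝ) : z < gAux z z := by
  have h1 : gAux z (z + 1) < gAux z z := gAux_lt z _ (by linarith)
  have h2 : z ≤ gAux z (z + 1) := by
    apply le_of_tendsto (gAux_tendsto_atTop z)
    filter_upwards [eventually_ge_atTop (z + 1)] with y hy
    rcases eq_or_lt_of_le hy with h | hy'
    · exact h ▸ le_rfl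
    · exact (gAux_strictAntiOn z (by simp only [mem_Ici]; linarith : z + 1 ∈ Ici z) (by simp only [mem_Ici]; linarith : y ∈ Ici z) hy').le
  linarith

lemma cdf_surj {p : ℝ} (hp : p ∈ Ioo (0:ℝ) 1) : ∃ y, stdGaussCDF y = p := by
  obtain ⟨a, ha⟩ := (cdf_tendsto_atBot.eventually_lt_const hp.1).exists
  obtain ⟨b, hb⟩ := (cdf_tendsto_atTop.eventually_const_lt hp.2).exists
  have hab : a ≤ b := (cdf_strictMono.lt_iff_lt.1 (ha.trans hb)).le
  have := intermediate_value_Icc hab cdf_continuous.continuousOn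
  obtain ⟨y, _, hy⟩ := this ⟨ha.le, hb.le⟩
  exact ⟨y, hy⟩

/-- The probit-regularised maximisation `max_{p ∈ [0,1]} { p·z + φ(Φ⁻¹(p)) }` has the unique
maximiser `p* = Φ(z)` and optimal value `z·Φ(z) + φ(z)`. -/
theorem probit_regularised_max (z : ℝ) :
    let f : ℝ → ℝ := fun p => p * z + probitReg p
    stdGaussCDF z ∈ Set.Icc (0 : ℝ) 1 ∧
    f (stdGaussCDF z) = z * stdGaussCDF z + stdGaussPDF z ∧
    IsMaxOn f (Set.Icc (0 : ℝ) 1) (stdGaussCDF z) ∧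
    (∀ p ∈ Set.Icc (0 : ℝ) 1, f p = f (stdGaussCDF z) → p = stdGaussCDF z) := by
  intro f
  have hΦ0 : 0 < stdGaussCDF z := cdf_pos z
  have hΦ1 : stdGaussCDF z < 1 := cdf_lt_one z
  have hval : f (stdGaussCDF z) = z * stdGaussCDF z + stdGaussPDF z := by
    show stdGaussCDF z * z + probitReg (stdGaussCDF z) = _
    rw [probitReg, if_neg (by push_neg; exact ⟨hΦ0, hΦ1⟩), quantile_cdf]
    ring
  have hmax0 : f (stdGaussCDF z) = gAux z z := by rw [hval]; rfl
  have key : ∀ p ∈ Icc (0:ℝ) 1, p ≠ stdGaussCDF z → f p < gAux z z := by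
    intro p hp hne
    rcases eq_or_lt_of_le hp.1 with h0 | h0
    · have : f p = 0 := by
        show p * z + probitReg p = 0
        rw [probitReg, if_pos (Or.inl h0.ge), ← h0]; ring
      rw [this]; exact gAux_pos z
    rcases eq_or_lt_of_le hp.2 with h1 | h1
    · have : f p = z := by
        show p * z + probitReg p = z
        rw [probitReg, if_pos (Or.inr h1.ge), h1]; ring
      rw [this]; exact lt_gAux z
    · obtain ⟨y, hy⟩ := cdf_surj ⟨h0, h1⟩
      have hreg : probitReg p = stdGaussPDF y := by
        rw [probitReg, if_neg (by push_neg; exact ⟨h0, h1⟩), ← hy, quantile_cdf]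
      have hyz : y ≠ z := fun h => hne (by rw [← hy, h])
      have hlt := gAux_lt z y hyz
      show p * z + probitReg p < gAux z z
      rw [hreg, ← hy]
      have e : stdGaussCDF y * z + stdGaussPDF y = gAux z y := by unfold gAux; ring
      rw [e]; exact hlt
  refine ⟨⟨cdf_nonneg z, cdf_le_one z⟩, hval, ?_, ?_⟩
  · intro p hp
    simp only [mem_setOf_eq]
    by_cases hne : p = stdGaussCDF z
    · rw [hne]
    · rw [hmax0]; exact (key p hp hne).le
  · intro p hp hfp
    by_contra hne
    have h := key p hp hne
    rw [hfp, hmax0] at h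
    exact lt_irrefl _ h

end
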